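/- No one-way universal blind one-counter automaton (1U1BCA) over the alphabet {a,b,c,d,e} recognizes the language L = (complement of EQ* within {a,b}*) ∪ EQ³, i.e., there is no 1U1BCA whose set of accepted strings among {a,b,c,d,e}* equals L. -/
import Mathlib


/-- Input symbols extended with the left (`cent`) and right (`dollar`) end-markers. -/
inductive TSym (α : Type) : Type
  | cent : TSym α
  | letter : α → TSym α
  | dollar : TSym α

/-- The tape content `¢ w $` for an input word `w`. -/
def tagged {α : Type} (w : List α) : List (TSym α) :=
  TSym.cent :: (w.map TSym.letter ++ [TSym.dollar])

/-- A one-way universal (nondeterministic, with universal acceptance) blind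
one-counter automaton. -/
structure OneU1BCA (α : Type) where
  Q : Type
  [fintypeQ : Fintype Q]
  q0 : Q
  acc : Set Q
  m : ℕ
  Δ : Q → TSym α → Q → ℤ → Prop
  bound : ∀ q σ q' c, Δ q σ q' c → |c| ≤ (m : ℤ)
  total : ∀ q σ, ∃ q' c, Δ q σ q' c

namespace OneU1BCA

variable {α : Type} (M : OneU1BCA α)

/-- The set of configurations reachable in one step from some configuration in `S`. -/
def stepU (S : Set (M.Q × ℤ)) (σ : TSym α) : Set (M.Q × ℤ) :=
  {p' | ∃ p ∈ S, ∃ c : ℤ, M.Δ p.1 σ p'.1 c ∧ p'.2 = p.2 + c}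

/-- The set of configurations reachable after reading `¢ w $`. -/
def reach (w : List α) : Set (M.Q × ℤ) :=
  (tagged w).foldl M.stepU {(M.q0, 0)}

/-- Universal acceptance: every computation path ends in an accepting state with
counter value exactly `0`. -/
def accepts (w : List α) : Prop :=
  ∀ p ∈ M.reach w, p.1 ∈ M.acc ∧ p.2 = 0

/-- `M` recognizes `L` if it accepts exactly the members of `L`. -/
def recognizes (L : Set (List α)) : Prop :=
  ∀ w : List α, M.accepts w ↔ w ∈ L

end OneU1BCA

/-- The alphabet `{a, b, c, d, e}`. -/
inductive Γ5 : Type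
  | a : Γ5
  | b : Γ5
  | c : Γ5
  | d : Γ5
  | e : Γ5
deriving DecidableEq

/-- The language `EQ = { a^n b^n : n > 0 }` over `{a,b,c,d,e}`. -/
def EQab : Language Γ5 :=
  {w | ∃ n : ℕ, 0 < n ∧ w = List.replicate n Γ5.a ++ List.replicate n Γ5.b}

/-- The Kleene closure `EQ*`. -/
def EQabStar : Language Γ5 := KStar.kstar EQab

/-- The complement of `EQ*` within `{a,b}*`. -/
def coEQstar : Set (List Γ5) :=
  {w | (∀ x ∈ w, x = Γ5.a ∨ x = Γ5.b) ∧ w ∉ EQabStar}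

/-- The language `EQ³ = { c^n d^n e^n : n ≥ 0 }`. -/
def EQ3 : Set (List Γ5) :=
  {w | ∃ n : ℕ, w = List.replicate n Γ5.c ++ List.replicate n Γ5.d ++ List.replicate n Γ5.e}

/-- The language `L = (complement of EQ* within {a,b}*) ∪ EQ³`. -/
def LangL : Set (List Γ5) := coEQstar ∪ EQ3


section Aux

variable {α : Type} (M : OneU1BCA α)

lemma stepU_mono {S T : Set (M.Q × ℤ)} (h : S ⊆ T) (σ : TSym α) :
    M.stepU S σ ⊆ M.stepU T σ := by
  rintro p' ⟨p, hp, c, hΔ, hv⟩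
  exact ⟨p, h hp, c, hΔ, hv⟩

lemma foldl_mono (l : List (TSym α)) :
    ∀ {S T : Set (M.Q × ℤ)}, S ⊆ T → l.foldl M.stepU S ⊆ l.foldl M.stepU T := by
  induction l with
  | nil => intro S T h; exact h
  | cons σ l ih => intro S T h; exact ih (stepU_mono M h σ)

lemma foldl_shift (l : List (TSym α)) :
    ∀ (S : Set (M.Q × ℤ)) (t : ℤ) (q : M.Q) (v : ℤ),
      (q, v) ∈ l.foldl M.stepU S →
      (q, v + t) ∈ l.foldl M.stepU ((fun p => (p.1, p.2 + t)) '' S) := by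
  induction l with
  | nil => intro S t q v h; exact ⟨(q, v), h, rfl⟩
  | cons σ l ih =>
    intro S t q v h
    refine foldl_mono M l ?_ (ih (M.stepU S σ) t q v h)
    rintro x ⟨p', hp', rfl⟩
    obtain ⟨p, hp, c, hΔ, hv⟩ := hp'
    exact ⟨(p.1, p.2 + t), ⟨p, hp, rfl⟩, c, hΔ, by simp; omega⟩

lemma foldl_single (l : List (TSym α)) :
    ∀ (S : Set (M.Q × ℤ)) (x), x ∈ l.foldl M.stepU S →
      ∃ s ∈ S, x ∈ l.foldl M.stepU {s} := by
  induction l with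
  | nil => intro S x h; exact ⟨x, h, rfl⟩
  | cons σ l ih =>
    intro S x h
    obtain ⟨s', hs', hx⟩ := ih (M.stepU S σ) x h
    obtain ⟨s, hs, c, hΔ, hv⟩ := hs'
    refine ⟨s, hs, foldl_mono M l ?_ hx⟩
    rintro y rfl
    exact ⟨s, rfl, c, hΔ, hv⟩

end Aux

lemma eqstar_count {w : List Γ5} (hw : w ∈ EQabStar) :
    w.count Γ5.a = w.count Γ5.b := by
  rw [EQabStar, Language.mem_kstar] at hw
  obtain ⟨L, rfl, hL⟩ := hw
  rw [List.count_flatten, List.count_flatten]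
  congr 1
  refine List.map_congr_left ?_
  intro y hy
  obtain ⟨n, -, rfl⟩ := hL y hy
  simp [List.count_replicate]

lemma mem_LangL_of_ne {i j : ℕ} (hij : i ≠ j) :
    List.replicate i Γ5.a ++ List.replicate j Γ5.b ∈ LangL := by
  left
  constructor
  · intro x hx
    rcases List.mem_append.1 hx with h | h
    · exact Or.inl (List.eq_of_mem_replicate h)
    · exact Or.inr (List.eq_of_mem_replicate h)
  · intro h
    have := eqstar_count h
    simp [List.count_replicate] at this
    omega

lemma not_mem_LangL {n : ℕ} (hn : 0 < n) :
    List.replicate n Γ5.a ++ List.replicate n Γ5.b ∉ LangL := by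
  rintro (⟨-, h⟩ | ⟨k, hk⟩)
  · apply h
    rw [EQabStar, Language.mem_kstar]
    exact ⟨[List.replicate n Γ5.a ++ List.replicate n Γ5.b], by simp,
      by rintro y hy; simp at hy; exact hy ▸ ⟨n, hn, rfl⟩⟩
  · have := congrArg (List.count Γ5.a) hk
    simp [List.count_replicate] at this
    omega

/-- no 1U1BCA recognizes `L = (complement of EQ* within {a,b}*) ∪ EQ³`. -/
theorem stmt17 : ¬ ∃ M : OneU1BCA Γ5, M.recognizes LangL := by
  rintro ⟨M, hM⟩
  haveI := M.fintypeQ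
  set A : ℕ → Set (M.Q × ℤ) := fun n =>
    (TSym.cent :: List.replicate n (TSym.letter Γ5.a)).foldl M.stepU {(M.q0, 0)} with hA
  set B : ℕ → List (TSym Γ5) := fun n =>
    List.replicate n (TSym.letter Γ5.b) ++ [TSym.dollar] with hB
  have hreach : ∀ i j, M.reach (List.replicate i Γ5.a ++ List.replicate j Γ5.b)
      = (B j).foldl M.stepU (A i) := by
    intro i j
    have ht : tagged (List.replicate i Γ5.a ++ List.replicate j Γ5.b)
        = (TSym.cent :: List.replicate i (TSym.letter Γ5.a)) ++ B j := by
      simp [tagged, hB]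
    rw [OneU1BCA.reach, ht, List.foldl_append]
  have hbad : ∀ n : ℕ, ∃ p : M.Q, ∃ u : ℤ, ∃ q : M.Q, ∃ v : ℤ,
      (p, u) ∈ A (n+1) ∧ (q, v) ∈ (B (n+1)).foldl M.stepU {(p, u)} ∧
      (q ∈ M.acc → v ≠ 0) := by
    intro n
    have h1 : ¬ M.accepts (List.replicate (n+1) Γ5.a ++ List.replicate (n+1) Γ5.b) := by
      rw [hM]; exact not_mem_LangL (Nat.succ_pos n)
    rw [OneU1BCA.accepts] at h1
    push_neg at h1
    obtain ⟨⟨q, v⟩, hqv, hbadc⟩ := h1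
    rw [hreach] at hqv
    obtain ⟨⟨p, u⟩, hpu, hq⟩ := foldl_single M (B (n+1)) (A (n+1)) (q, v) hqv
    exact ⟨p, u, q, v, hpu, hq, hbadc⟩
  choose p u q v hmem hrun hbad' using hbad
  have cross : ∀ i j : ℕ, p i = p j → i ≠ j → q j ∈ M.acc ∧ u i = u j - v j := by
    intro i j hpij hij
    have hshift := foldl_shift M (B (j+1)) {(p j, u j)} (u i - u j) (q j) (v j) (hrun j)
    have hsub : ((fun x : M.Q × ℤ => (x.1, x.2 + (u i - u j))) '' {(p j, u j)}) ⊆ A (i+1) := by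
      rintro y ⟨x, hx, rfl⟩
      rw [Set.mem_singleton_iff] at hx
      subst hx
      have hxx : ((p j, u j).1, (p j, u j).2 + (u i - u j)) = (p i, u i) := by
        rw [Prod.mk.injEq]
        exact ⟨hpij.symm, by ring⟩
      show ((p j, u j).1, (p j, u j).2 + (u i - u j)) ∈ A (i+1)
      rw [hxx]; exact hmem i
    have hin : (q j, v j + (u i - u j)) ∈
        M.reach (List.replicate (i+1) Γ5.a ++ List.replicate (j+1) Γ5.b) := by
      rw [hreach]
      exact foldl_mono M (B (j+1)) hsub hshift
    have hacc := (hM _).2 (mem_LangL_of_ne (by omega : i + 1 ≠ j + 1))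
      (q j, v j + (u i - u j)) hin
    refine ⟨hacc.1, ?_⟩
    have := hacc.2
    simp only at this
    omega
  obtain ⟨s, hs⟩ := Finite.exists_infinite_fiber p
  have hsinf : (p ⁻¹' {s}).Infinite := Set.infinite_coe_iff.1 hs
  obtain ⟨n1, hn1⟩ := hsinf.nonempty
  obtain ⟨n2, hn2⟩ := (hsinf.diff (Set.finite_singleton n1)).nonempty
  obtain ⟨n3, hn3⟩ := ((hsinf.diff (Set.finite_singleton n1)).diff
    (Set.finite_singleton n2)).nonempty
  have hp1 : p n1 = s := hn1
  have hp2 : p n2 = s := hn2.1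
  have hp3 : p n3 = s := hn3.1.1
  have h12 : n1 ≠ n2 := fun h => hn2.2 (by simp [h.symm])
  have h13 : n1 ≠ n3 := fun h => hn3.1.2 (by simp [h.symm])
  have h23 : n2 ≠ n3 := fun h => hn3.2 (by simp [h.symm])
  have c12 := cross n1 n2 (by rw [hp1, hp2]) h12
  have c13 := cross n1 n3 (by rw [hp1, hp3]) h13
  have c23 := cross n2 n3 (by rw [hp2, hp3]) h23
  have hv2 : v n2 ≠ 0 := hbad' n2 c12.1
  omega
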